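/- Let $V$ be a real vector space equipped with a Lorentzian inner product $\eta$ of signature $(-,+,\dots,+)$. If $n_1, n_2, n_3 \in V$ are null vectors (i.e. $\eta(n_i,n_i)=0$) that are pairwise linearly independent, then $n_1, n_2, n_3$ are linearly independent. -/
import Mathlib


/-- The standard Lorentzian (Minkowski) inner product of signature `(-,+,…,+)` on `ℝ^d`. -/
noncomputable def minkowski (d : ℕ) (u v : Fin d → ℝ) : ℝ :=
  ∑ i : Fin d, (if (i : ℕ) = 0 then (-1 : ℝ) else 1) * u i * v i

lemma mink_comm (d : ℕ) (u v : Fin d → ℝ) : minkowski d u v = minkowski d v u := by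
  unfold minkowski
  exact Finset.sum_congr rfl fun i _ => by ring

lemma mink_lin3 (d : ℕ) (w x y z : Fin d → ℝ) (a b c : ℝ) :
    minkowski d w (a • x + b • y + c • z)
      = a * minkowski d w x + b * minkowski d w y + c * minkowski d w z := by
  unfold minkowski
  rw [Finset.mul_sum, Finset.mul_sum, Finset.mul_sum, ← Finset.sum_add_distrib,
    ← Finset.sum_add_distrib]
  refine Finset.sum_congr rfl fun i _ => ?_
  simp only [Pi.add_apply, Pi.smul_apply, smul_eq_mul]
  ring

lemma mink_zero_right (d : ℕ) (u : Fin d → ℝ) : minkowski d u 0 = 0 := by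
  unfold minkowski; simp

/-- key sum-of-squares identity -/
lemma mink_key (d : ℕ) [NeZero d] (u v : Fin d → ℝ) :
    ∑ i : Fin d, (if (i : ℕ) = 0 then (0:ℝ) else (u 0 * v i - v 0 * u i)^2)
      = (u 0)^2 * minkowski d v v - 2 * (u 0) * (v 0) * minkowski d u v
        + (v 0)^2 * minkowski d u u := by
  unfold minkowski
  rw [Finset.mul_sum, Finset.mul_sum, Finset.mul_sum, ← Finset.sum_sub_distrib,
    ← Finset.sum_add_distrib]
  refine Finset.sum_congr rfl fun i _ => ?_
  by_cases h : (i : ℕ) = 0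
  · have : i = 0 := Fin.ext h
    subst this
    simp only [h, if_pos]
    ring
  · simp only [h, if_neg, if_false]
    ring

lemma null_first_ne_zero {d : ℕ} [NeZero d] {u : Fin d → ℝ}
    (hu : minkowski d u u = 0) (hne : u ≠ 0) : u 0 ≠ 0 := by
  intro h0
  apply hne
  funext i
  show u i = 0
  have hsum : ∑ j : Fin d, (if (j : ℕ) = 0 then (0:ℝ) else (u j)^2) = 0 := by
    have : ∑ j : Fin d, (if (j : ℕ) = 0 then (0:ℝ) else (u j)^2)
        = ∑ j : Fin d, (if (j : ℕ) = 0 then (-1:ℝ) else 1) * u j * u j := by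
      refine Finset.sum_congr rfl fun j _ => ?_
      by_cases h : (j : ℕ) = 0
      · have : j = 0 := Fin.ext h
        subst this
        simp [h, h0]
      · simp [h]; ring
    rw [this]; exact hu
  have hzero := (Finset.sum_eq_zero_iff_of_nonneg (fun j _ => by positivity)).mp hsum
  by_cases h : (i : ℕ) = 0
  · have : i = 0 := Fin.ext h
    subst this
    exact h0
  · have := hzero i (Finset.mem_univ i)
    simp only [h, if_neg, if_false] at this
    have := pow_eq_zero_iff (n := 2) (by norm_num) |>.mp this
    exact this

lemma null_orth_ne_zero {d : ℕ} [NeZero d] {u v : Fin d → ℝ}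
    (hu : minkowski d u u = 0) (hv : minkowski d v v = 0)
    (hune : u ≠ 0) (hind : LinearIndependent ℝ ![u, v]) :
    minkowski d u v ≠ 0 := by
  intro huv
  have hu0 : u 0 ≠ 0 := null_first_ne_zero hu hune
  have hsum : ∑ i : Fin d, (if (i : ℕ) = 0 then (0:ℝ) else (u 0 * v i - v 0 * u i)^2) = 0 := by
    rw [mink_key]
    rw [hu, hv, huv]; ring
  have hzero := (Finset.sum_eq_zero_iff_of_nonneg (fun j _ => by positivity)).mp hsum
  have hprop : ∀ i : Fin d, u 0 * v i = v 0 * u i := by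
    intro i
    by_cases h : (i : ℕ) = 0
    · have : i = 0 := Fin.ext h
      subst this; ring
    · have := hzero i (Finset.mem_univ i)
      simp only [h, if_neg, if_false] at this
      have := pow_eq_zero_iff (n := 2) (by norm_num) |>.mp this
      linarith
  have heq : (-(v 0)) • u + (u 0) • v = 0 := by
    funext i
    simp only [Pi.add_apply, Pi.smul_apply, smul_eq_mul, Pi.zero_apply]
    have := hprop i
    ring_nf
    linarith [hprop i]
  have := (LinearIndependent.pair_iff.mp hind) (-(v 0)) (u 0) heq
  exact hu0 this.2

/-- Three pairwise linearly independent null vectors in Lorentzian signature are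
linearly independent. -/
theorem three_null_pairwise_indep_implies_indep
    (d : ℕ) (hd : 3 ≤ d) (n₁ n₂ n₃ : Fin d → ℝ)
    (hnull₁ : n₁ ≠ 0 ∧ minkowski d n₁ n₁ = 0)
    (hnull₂ : n₂ ≠ 0 ∧ minkowski d n₂ n₂ = 0)
    (hnull₃ : n₃ ≠ 0 ∧ minkowski d n₃ n₃ = 0)
    (h12 : LinearIndependent ℝ ![n₁, n₂])
    (h13 : LinearIndependent ℝ ![n₁, n₃])
    (h23 : LinearIndependent ℝ ![n₂, n₃]) :
    LinearIndependent ℝ ![n₁, n₂, n₃] := by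
  haveI : NeZero d := ⟨by omega⟩
  obtain ⟨hn1, e11⟩ := hnull₁
  obtain ⟨hn2, e22⟩ := hnull₂
  obtain ⟨hn3, e33⟩ := hnull₃
  have ha : minkowski d n₁ n₂ ≠ 0 := null_orth_ne_zero e11 e22 hn1 h12
  have hb : minkowski d n₁ n₃ ≠ 0 := null_orth_ne_zero e11 e33 hn1 h13
  have hc : minkowski d n₂ n₃ ≠ 0 := null_orth_ne_zero e22 e33 hn2 h23
  rw [Fintype.linearIndependent_iff]
  intro g hg
  have hsum : g 0 • n₁ + g 1 • n₂ + g 2 • n₃ = 0 := by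
    have := hg
    rw [Fin.sum_univ_three] at this
    simpa using this
  set a := minkowski d n₁ n₂ with hadef
  set b := minkowski d n₁ n₃ with hbdef
  set c := minkowski d n₂ n₃ with hcdef
  have E1 : g 1 * a + g 2 * b = 0 := by
    have := congrArg (minkowski d n₁) hsum
    rw [mink_lin3, mink_zero_right, e11] at this
    linarith
  have E2 : g 0 * a + g 2 * c = 0 := by
    have := congrArg (minkowski d n₂) hsum
    rw [mink_lin3, mink_zero_right, e22, mink_comm d n₂ n₁] at this
    linarith
  have E3 : g 0 * b + g 1 * c = 0 := by
    have := congrArg (minkowski d n₃) hsum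
    rw [mink_lin3, mink_zero_right, e33, mink_comm d n₃ n₁, mink_comm d n₃ n₂] at this
    linarith
  have key : c * (g 2 * b - g 1 * a) = 0 := by linear_combination b * E2 - a * E3
  have h2b : g 2 * b = g 1 * a := by
    rcases mul_eq_zero.mp key with h | h
    · exact absurd h hc
    · linarith
  have hg2 : g 2 = 0 := by
    have : 2 * (g 2 * b) = 0 := by linarith
    have : g 2 * b = 0 := by linarith
    rcases mul_eq_zero.mp this with h | h
    · exact h
    · exact absurd h hb
  have hg1 : g 1 = 0 := by
    have : g 1 * a = 0 := by rw [hg2] at E1; linarith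
    rcases mul_eq_zero.mp this with h | h
    · exact h
    · exact absurd h ha
  have hg0 : g 0 = 0 := by
    have : g 0 * a = 0 := by rw [hg2] at E2; linarith
    rcases mul_eq_zero.mp this with h | h
    · exact h
    · exact absurd h ha
  intro i
  fin_cases i <;> assumption
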